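/- arXiv:2210.03008 — 2 statements merged into one kernel-verified Lean document; each statement's English description precedes it below -/
import Mathlib

section
/- Let (M, ν) be a probability space, and let Φ, Φ̃ : M → [0, ∞) be measurable with exp(-Φ), exp(-Φ̃) ∈ L¹(M, ν). Set Z = ∫ exp(-Φ) dν and Z̃ = ∫ exp(-Φ̃) dν, and assume Z̃ > 0. Then log(Z/Z̃) ≤ (1/Z̃) ∫ |Φ - Φ̃| dν. -/
open MeasureTheory

lemma exp_diff_le_abs {a b : ℝ} (ha : 0 ≤ a) : Real.exp (-a) - Real.exp (-b) ≤ |a - b| := by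
  rcases le_total b a with h | h
  · have : Real.exp (-a) ≤ Real.exp (-b) := Real.exp_le_exp.mpr (by linarith)
    have := abs_nonneg (a - b); linarith
  · have h1 : Real.exp (-a) - Real.exp (-b) = Real.exp (-a) * (1 - Real.exp (-(b - a))) := by
      rw [mul_sub, mul_one, ← Real.exp_add]; ring_nf
    have h2 : Real.exp (-a) ≤ 1 := Real.exp_le_one_iff.mpr (by linarith)
    have h3 : 1 - Real.exp (-(b - a)) ≤ b - a := by
      have := Real.add_one_le_exp (-(b - a)); linarith
    have h4 : 0 ≤ 1 - Real.exp (-(b - a)) := by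
      have : Real.exp (-(b - a)) ≤ 1 := Real.exp_le_one_iff.mpr (by linarith)
      linarith
    calc Real.exp (-a) - Real.exp (-b) = Real.exp (-a) * (1 - Real.exp (-(b - a))) := h1
      _ ≤ 1 * (b - a) := mul_le_mul h2 h3 h4 zero_le_one
      _ = b - a := one_mul _
      _ ≤ |a - b| := by rw [abs_sub_comm]; exact le_abs_self _

theorem log_evidence_ratio_bound {M : Type*} [MeasurableSpace M] (ν : Measure M)
    [IsProbabilityMeasure ν]
    (Φ Φt : M → ℝ) (hΦmeas : Measurable Φ) (hΦtmeas : Measurable Φt)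
    (hΦnn : ∀ m, 0 ≤ Φ m) (hΦtnn : ∀ m, 0 ≤ Φt m)
    (hI : Integrable (fun m => Real.exp (-Φ m)) ν)
    (hIt : Integrable (fun m => Real.exp (-Φt m)) ν)
    (hdiff : Integrable (fun m => |Φ m - Φt m|) ν)
    (Z Zt : ℝ) (hZ : Z = ∫ m, Real.exp (-Φ m) ∂ν)
    (hZt : Zt = ∫ m, Real.exp (-Φt m) ∂ν) (hZtpos : 0 < Zt) :
    Real.log (Z / Zt) ≤ (1 / Zt) * ∫ m, |Φ m - Φt m| ∂ν := by
  have hZpos : 0 < Z := by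
    rw [hZ]
    apply integral_pos_iff_support_of_nonneg (fun m => (Real.exp_pos _).le) hI |>.mpr
    have : (Function.support fun m => Real.exp (-Φ m)) = Set.univ := by
      ext m; simp [Function.support, (Real.exp_pos (-Φ m)).ne']
    rw [this]; simp
  have hlog : Real.log (Z / Zt) ≤ Z / Zt - 1 :=
    Real.log_le_sub_one_of_pos (div_pos hZpos hZtpos)
  have hZZt : Z - Zt ≤ ∫ m, |Φ m - Φt m| ∂ν := by
    rw [hZ, hZt, ← integral_sub hI hIt]
    exact integral_mono (hI.sub hIt) hdiff (fun m => exp_diff_le_abs (hΦnn m))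
  have : Z / Zt - 1 = (Z - Zt) / Zt := by field_simp
  rw [this] at hlog
  calc Real.log (Z / Zt) ≤ (Z - Zt) / Zt := hlog
    _ ≤ (∫ m, |Φ m - Φt m| ∂ν) / Zt := by
        exact div_le_div_of_nonneg_right hZZt hZtpos.le
    _ = (1 / Zt) * ∫ m, |Φ m - Φt m| ∂ν := by ring
end

section
/- Let (M, ν) be a probability space, C a symmetric positive definite n×n matrix, y ∈ ℝⁿ, and f, g : M → ℝⁿ measurable with f, g ∈ L²(M, ν; ℝⁿ). Define Φ(m) = (1/2)(y - f(m))ᵀ C⁻¹ (y - f(m)) and Φ̃(m) = (1/2)(y - g(m))ᵀ C⁻¹ (y - g(m)). Then ‖Φ - Φ̃‖_{L¹(M,ν)} ≤ (1/2) ‖C⁻¹‖₂ (‖f‖_{L²} + ‖g‖_{L²} + 2‖y‖₂) ‖f - g‖_{L²(M,ν;ℝⁿ)}. -/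
open MeasureTheory RealInnerProductSpace

theorem ptwise {E : Type*} [NormedAddCommGroup E] [InnerProductSpace ℝ E]
    (A : E →L[ℝ] E) (u v : E) :
    |⟪u, A u⟫ - ⟪v, A v⟫| ≤ ‖A‖ * ((‖u‖ + ‖v‖) * ‖u - v‖) := by
  have h1 : ⟪u, A u⟫ - ⟪v, A v⟫ = ⟪u - v, A u⟫ + ⟪v, A (u - v)⟫ := by
    simp [inner_sub_left, inner_sub_right, map_sub]
  have h2 : |⟪u - v, A u⟫| ≤ ‖u - v‖ * (‖A‖ * ‖u‖) :=
    (abs_real_inner_le_norm _ _).trans (by gcongr; exact A.le_opNorm u)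
  have h3 : |⟪v, A (u - v)⟫| ≤ ‖v‖ * (‖A‖ * ‖u - v‖) :=
    (abs_real_inner_le_norm _ _).trans (by gcongr; exact A.le_opNorm _)
  calc |⟪u, A u⟫ - ⟪v, A v⟫| ≤ |⟪u - v, A u⟫| + |⟪v, A (u - v)⟫| := by
        rw [h1]; exact abs_add_le _ _
    _ ≤ ‖u - v‖ * (‖A‖ * ‖u‖) + ‖v‖ * (‖A‖ * ‖u - v‖) := add_le_add h2 h3
    _ = ‖A‖ * ((‖u‖ + ‖v‖) * ‖u - v‖) := by ring

theorem potential_difference_L1_bound {M : Type*} [MeasurableSpace M] (ν : Measure M)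
    [IsProbabilityMeasure ν] {n : ℕ}
    (C : Matrix (Fin n) (Fin n) ℝ) (hC : C.PosDef)
    (y : EuclideanSpace ℝ (Fin n))
    (f g : M → EuclideanSpace ℝ (Fin n))
    (hf : MemLp f 2 ν) (hg : MemLp g 2 ν)
    (Φ Φt : M → ℝ)
    (hΦ : ∀ m, Φ m =
      (1 / 2) * ⟪y - f m, Matrix.toEuclideanCLM (𝕜 := ℝ) C⁻¹ (y - f m)⟫)
    (hΦt : ∀ m, Φt m =
      (1 / 2) * ⟪y - g m, Matrix.toEuclideanCLM (𝕜 := ℝ) C⁻¹ (y - g m)⟫) :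
    (eLpNorm (fun m => Φ m - Φt m) 1 ν).toReal
      ≤ (1 / 2) * ‖Matrix.toEuclideanCLM (𝕜 := ℝ) C⁻¹‖ *
          ((eLpNorm f 2 ν).toReal + (eLpNorm g 2 ν).toReal + 2 * ‖y‖) *
          (eLpNorm (fun m => f m - g m) 2 ν).toReal := by
  set A := Matrix.toEuclideanCLM (𝕜 := ℝ) C⁻¹ with hA
  set K : ℝ := ‖A‖ with hK
  have hK0 : 0 ≤ K := norm_nonneg _
  set h : M → ℝ := fun m => ‖f m‖ + ‖g m‖ + 2 * ‖y‖ with hh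
  set φ : M → ℝ := fun m => (1 / 2 * K) * h m with hφ
  -- pointwise bound
  have hpt : ∀ m, ‖Φ m - Φt m‖ ≤ ‖(φ • fun m => f m - g m) m‖ := by
    intro m
    have hb := ptwise A (y - f m) (y - g m)
    have hsub : (y - f m) - (y - g m) = -(f m - g m) := by abel
    rw [hsub, norm_neg] at hb
    have h1 : ‖y - f m‖ + ‖y - g m‖ ≤ h m := by
      have e1 := norm_sub_le y (f m)
      have e2 := norm_sub_le y (g m)
      simp only [hh]; linarith
    have hhm : 0 ≤ h m := by simp only [hh]; positivity
    calc ‖Φ m - Φt m‖ = 1/2 * |⟪y - f m, A (y - f m)⟫ - ⟪y - g m, A (y - g m)⟫| := by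
          rw [hΦ, hΦt, ← mul_sub, Real.norm_eq_abs, abs_mul]; norm_num
      _ ≤ 1/2 * (K * ((‖y - f m‖ + ‖y - g m‖) * ‖f m - g m‖)) := by
          have := mul_le_mul_of_nonneg_left hb (by norm_num : (0:ℝ) ≤ 1/2)
          linarith
      _ ≤ 1/2 * (K * (h m * ‖f m - g m‖)) := by gcongr
      _ = ‖(1/2 * K * h m : ℝ)‖ * ‖f m - g m‖ := by
          rw [Real.norm_eq_abs, abs_of_nonneg (by positivity)]; ring
      _ = ‖(φ • fun m => f m - g m) m‖ := by
          rw [Pi.smul_apply', norm_smul]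
  have hfg : MemLp (fun m => f m - g m) 2 ν := hf.sub hg
  have meas_fg : AEStronglyMeasurable (fun m => f m - g m) ν := hfg.1
  have meas_h : AEStronglyMeasurable h ν :=
    (hf.1.norm.add hg.1.norm).add aestronglyMeasurable_const
  have meas_φ : AEStronglyMeasurable φ ν := meas_h.const_mul _
  have step1 : eLpNorm (fun m => Φ m - Φt m) 1 ν
      ≤ eLpNorm (φ • fun m => f m - g m) 1 ν := eLpNorm_mono hpt
  have step2 : eLpNorm (φ • fun m => f m - g m) 1 ν
      ≤ eLpNorm φ 2 ν * eLpNorm (fun m => f m - g m) 2 ν :=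
    eLpNorm_smul_le_mul_eLpNorm meas_fg meas_φ
  have step3 : eLpNorm φ 2 ν = ‖(1/2 * K : ℝ)‖₊ * eLpNorm h 2 ν := by
    have : φ = (1/2 * K : ℝ) • h := by funext m; simp [hφ, smul_eq_mul]
    rw [this, eLpNorm_const_smul]; rfl
  have hconst : eLpNorm (fun _ : M => (2 * ‖y‖ : ℝ)) 2 ν = ENNReal.ofReal (2 * ‖y‖) := by
    rw [eLpNorm_const _ (by norm_num) (IsProbabilityMeasure.ne_zero ν)]
    simp only [measure_univ, ENNReal.one_rpow, mul_one]
    exact Real.enorm_eq_ofReal (by positivity)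
  have step4 : eLpNorm h 2 ν ≤ eLpNorm f 2 ν + eLpNorm g 2 ν + ENNReal.ofReal (2 * ‖y‖) := by
    have e1 : eLpNorm h 2 ν
        ≤ eLpNorm (fun m => ‖f m‖ + ‖g m‖) 2 ν + eLpNorm (fun _ => (2 * ‖y‖ : ℝ)) 2 ν :=
      eLpNorm_add_le (hf.1.norm.add hg.1.norm) aestronglyMeasurable_const one_le_two
    have e2 : eLpNorm (fun m => ‖f m‖ + ‖g m‖) 2 ν
        ≤ eLpNorm (fun m => ‖f m‖) 2 ν + eLpNorm (fun m => ‖g m‖) 2 ν :=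
      eLpNorm_add_le hf.1.norm hg.1.norm one_le_two
    rw [eLpNorm_norm, eLpNorm_norm] at e2
    rw [hconst] at e1
    calc eLpNorm h 2 ν ≤ _ := e1
      _ ≤ eLpNorm f 2 ν + eLpNorm g 2 ν + ENNReal.ofReal (2 * ‖y‖) := by gcongr
  have main : eLpNorm (fun m => Φ m - Φt m) 1 ν
      ≤ ‖(1/2 * K : ℝ)‖₊ * (eLpNorm f 2 ν + eLpNorm g 2 ν + ENNReal.ofReal (2 * ‖y‖))
        * eLpNorm (fun m => f m - g m) 2 ν := by
    refine step1.trans (step2.trans ?_)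
    rw [step3]
    exact mul_le_mul' (mul_le_mul' le_rfl step4) le_rfl
  have hRne : ‖(1/2 * K : ℝ)‖₊ * (eLpNorm f 2 ν + eLpNorm g 2 ν + ENNReal.ofReal (2 * ‖y‖))
        * eLpNorm (fun m => f m - g m) 2 ν ≠ ⊤ := by
    apply ENNReal.mul_ne_top
    apply ENNReal.mul_ne_top
    · exact ENNReal.coe_ne_top
    · exact (ENNReal.add_ne_top.2 ⟨ENNReal.add_ne_top.2 ⟨hf.2.ne, hg.2.ne⟩,
        ENNReal.ofReal_ne_top⟩)
    · exact hfg.2.ne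
  have := ENNReal.toReal_mono hRne main
  refine this.trans ?_
  rw [ENNReal.toReal_mul, ENNReal.toReal_mul, ENNReal.toReal_add
      (ENNReal.add_ne_top.2 ⟨hf.2.ne, hg.2.ne⟩) ENNReal.ofReal_ne_top,
    ENNReal.toReal_add hf.2.ne hg.2.ne, ENNReal.toReal_ofReal (by positivity)]
  simp only [ENNReal.coe_toReal, coe_nnnorm, Real.norm_eq_abs,
    abs_of_nonneg (by positivity : (0:ℝ) ≤ 1/2 * K)]
  apply le_of_eq; ring
end
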